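/- arXiv:1810.01045 — 2 statements merged into one kernel-verified Lean document; each statement's English description precedes it below -/
import Mathlib

section
/- Let ρ be a positive semidefinite trace-class operator (density matrix) on a complex Hilbert space K, and let J be an antiunitary on K with J^2 = -I and JρJ^* = ρ. Then every eigenvalue of ρ has even multiplicity, and consequently the von Neumann entropy S(ρ) = -Tr(ρ log ρ) satisfies S(ρ) ≥ log 2 whenever ρ ≠ 0 and Tr(ρ) = 1. -/
open Module

section Aux

variable {K : Type*} [NormedAddCommGroup K] [InnerProductSpace ℂ K] [FiniteDimensional ℂ K]

lemma even_finrank_of_J (J : K → K)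
    (hadd : ∀ x y, J (x + y) = J x + J y)
    (hsmul : ∀ (a : ℂ) (x : K), J (a • x) = (starRingEnd ℂ a) • J x)
    (hinner : ∀ x y, (inner ℂ (J x) (J y) : ℂ) = (inner ℂ y x : ℂ))
    (hJ2 : ∀ x, J (J x) = -x) :
    ∀ (m : ℕ) (E : Submodule ℂ K), (∀ x ∈ E, J x ∈ E) → finrank ℂ E = m → Even m := by
  have hJ0 : J 0 = 0 := by
    have := hsmul 0 0
    simpa using this
  have hJneg : ∀ x, J (-x) = - J x := by
    intro x
    have := hsmul (-1) x
    simpa using this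
  have horth : ∀ x, (inner ℂ (J x) x : ℂ) = 0 := by
    intro x
    have h := hinner x (J x)
    rw [hJ2, inner_neg_right] at h
    have : (2 : ℂ) * (inner ℂ (J x) x : ℂ) = 0 := by ring_nf; linear_combination -h
    simpa using this
  intro m
  induction m using Nat.strong_induction_on with
  | _ m ih =>
    intro E hE hdim
    rcases Nat.eq_zero_or_pos m with h0 | hm
    · simp [h0]
    -- pick a nonzero element of E
    have hEne : E ≠ ⊥ := by
      intro h
      rw [h] at hdim
      simp [finrank_bot] at hdim
      omega
    obtain ⟨x, hxE, hx0⟩ := Submodule.exists_mem_ne_zero_of_ne_bot hEne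
    -- normalize
    set u : K := (‖x‖ : ℂ)⁻¹ • x with hu
    have hu0 : u ≠ 0 := by
      simp only [hu, ne_eq, smul_eq_zero, inv_eq_zero, Complex.ofReal_eq_zero, norm_eq_zero]
      tauto
    have huE : u ∈ E := E.smul_mem _ hxE
    have hunorm : ‖u‖ = 1 := by
      simp [hu, norm_smul, hx0]
    have hJuE : J u ∈ E := hE u huE
    have hJunorm : ‖J u‖ = 1 := by
      have h := hinner u u
      have h1 : (inner ℂ (J u) (J u) : ℂ) = (‖J u‖ : ℂ)^2 := inner_self_eq_norm_sq_to_K _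
      have h2 : (inner ℂ u u : ℂ) = (‖u‖ : ℂ)^2 := inner_self_eq_norm_sq_to_K _
      rw [h1, h2, hunorm] at h
      have : (‖J u‖ : ℝ)^2 = 1^2 := by exact_mod_cast h
      nlinarith [norm_nonneg (J u)]
    -- orthonormal pair
    set f : Fin 2 → K := ![u, J u] with hf
    have hon : Orthonormal ℂ f := by
      constructor
      · intro i
        fin_cases i
        · simpa [hf] using hunorm
        · simpa [hf] using hJunorm
      · intro i j hij
        fin_cases i <;> fin_cases j
        · exact absurd rfl hij
        · show (inner ℂ u (J u) : ℂ) = 0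
          rw [← inner_conj_symm, horth u, map_zero]
        · exact horth u
        · exact absurd rfl hij
    have hli : LinearIndependent ℂ f := hon.linearIndependent
    set F : Submodule ℂ K := Submodule.span ℂ (Set.range f) with hF
    have hFE : F ≤ E := by
      rw [hF, Submodule.span_le]
      rintro y ⟨i, rfl⟩
      fin_cases i
      · exact huE
      · exact hJuE
    have hFdim : finrank ℂ F = 2 := by
      rw [hF, finrank_span_eq_card hli]
      simp
    have hkey := Submodule.finrank_add_inf_finrank_orthogonal (𝕜 := ℂ) hFE
    rw [hFdim, hdim] at hkey
    set E' : Submodule ℂ K := Fᗮ ⊓ E with hE'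
    have hE'inv : ∀ v ∈ E', J v ∈ E' := by
      intro v hv
      obtain ⟨hv1, hv2⟩ := hv
      refine ⟨?_, hE v hv2⟩
      have huF : u ∈ F := Submodule.subset_span ⟨0, rfl⟩
      have hJuF : J u ∈ F := Submodule.subset_span ⟨1, rfl⟩
      have hvu : (inner ℂ u v : ℂ) = 0 := hv1 u huF
      have hvJu : (inner ℂ (J u) v : ℂ) = 0 := hv1 (J u) hJuF
      have g1 : (inner ℂ (J v) u : ℂ) = 0 := by
        have : u = - J (J u) := by rw [hJ2, neg_neg]
        rw [this, inner_neg_right, hinner, hvJu, neg_zero]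
      have g2 : (inner ℂ (J v) (J u) : ℂ) = 0 := by rw [hinner, hvu]
      intro w hw
      rw [hF] at hw
      induction hw using Submodule.span_induction with
      | mem y hy =>
        obtain ⟨i, rfl⟩ := hy
        fin_cases i
        · show (inner ℂ u (J v) : ℂ) = 0
          rw [← inner_conj_symm, g1, map_zero]
        · show (inner ℂ (J u) (J v) : ℂ) = 0
          rw [← inner_conj_symm, g2, map_zero]
      | zero => simp
      | add a b _ _ ha hb => rw [inner_add_left, ha, hb, add_zero]
      | smul a y _ hy => rw [inner_smul_left, hy, mul_zero]
    have hE'dim : finrank ℂ E' = m - 2 := by omega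
    have := ih (m - 2) (by omega) E' hE'inv hE'dim
    have hm2 : m = (m - 2) + 2 := by omega
    rw [hm2]
    exact this.add (even_two)

end Aux

/-- Let `ρ` be a density matrix on a (finite-dimensional) complex Hilbert space `K`,
and `J` an antiunitary with `J² = -1` commuting with `ρ` (i.e. `JρJ* = ρ`).  Then every
eigenvalue of `ρ` has even multiplicity, and consequently the von Neumann entropy
`S(ρ) = -Tr(ρ log ρ) = -∑ λᵢ log λᵢ` is at least `log 2` whenever `ρ ≠ 0` and `Tr ρ = 1`. -/
theorem density_matrix_time_reversal_entropy
    {K : Type*} [NormedAddCommGroup K] [InnerProductSpace ℂ K] [FiniteDimensional ℂ K]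
    {n : ℕ} (hn : Module.finrank ℂ K = n)
    (ρ : K →ₗ[ℂ] K) (hsym : ρ.IsSymmetric)
    (hpos : ∀ x, 0 ≤ (inner ℂ (ρ x) x : ℂ).re)
    (J : K → K)
    (hadd : ∀ x y, J (x + y) = J x + J y)
    (hsmul : ∀ (a : ℂ) (x : K), J (a • x) = (starRingEnd ℂ a) • J x)
    (hinner : ∀ x y, (inner ℂ (J x) (J y) : ℂ) = (inner ℂ y x : ℂ))
    (hsurj : Function.Surjective J)
    (hJ2 : ∀ x, J (J x) = -x)
    (hcomm : ∀ x, J (ρ x) = ρ (J x)) :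
    (∀ μ : ℂ, Even (Module.finrank ℂ (Module.End.eigenspace (ρ : Module.End ℂ K) μ))) ∧
    (ρ ≠ 0 → LinearMap.trace ℂ K ρ = 1 →
      Real.log 2 ≤ - ∑ i : Fin n, hsym.eigenvalues hn i * Real.log (hsym.eigenvalues hn i)) := by
  have heven : ∀ μ : ℂ, Even (Module.finrank ℂ (Module.End.eigenspace (ρ : Module.End ℂ K) μ)) := by
    intro μ
    by_cases hb : Module.End.eigenspace (ρ : Module.End ℂ K) μ = ⊥
    · rw [hb]; simp
    · have hμ : Module.End.HasEigenvalue (ρ : Module.End ℂ K) μ := hb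
      have hre : starRingEnd ℂ μ = μ := hsym.conj_eigenvalue_eq_self hμ
      refine even_finrank_of_J J hadd hsmul hinner hJ2 _ _ ?_ rfl
      intro x hx
      rw [Module.End.mem_eigenspace_iff] at hx ⊢
      show ρ (J x) = μ • J x
      rw [← hcomm, hx, hsmul, hre]
  refine ⟨heven, fun hρ htr => ?_⟩
  set lam : Fin n → ℝ := hsym.eigenvalues hn with hlam
  set b : OrthonormalBasis (Fin n) ℂ K := hsym.eigenvectorBasis hn with hb
  -- trace equals sum of eigenvalues
  have htrace : LinearMap.trace ℂ K ρ = ∑ i : Fin n, (lam i : ℂ) := by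
    rw [LinearMap.trace_eq_matrix_trace ℂ b.toBasis, Matrix.trace]
    congr 1
    funext i
    rw [Matrix.diag_apply, LinearMap.toMatrix_apply]
    rw [OrthonormalBasis.coe_toBasis, hsym.apply_eigenvectorBasis hn i]
    rw [map_smul]
    simp [Basis.repr_self, ← hb, hlam]
  have hsum : ∑ i : Fin n, lam i = 1 := by
    rw [htrace] at htr
    exact_mod_cast htr
  have hnn : ∀ i, 0 ≤ lam i := by
    intro i
    have h := hpos (b i)
    rw [show ρ (b i) = (lam i : ℂ) • b i from hsym.apply_eigenvectorBasis hn i,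
      inner_smul_left, Complex.conj_ofReal, inner_self_eq_norm_sq_to_K,
      b.orthonormal.1 i] at h
    simpa using h
  -- every eigenvalue occurs at least twice
  have hpair : ∀ i : Fin n, ∃ j : Fin n, j ≠ i ∧ lam j = lam i := by
    intro i
    classical
    set s : Finset (Fin n) := Finset.univ.filter (fun j => lam j = lam i) with hs
    set Eμ : Submodule ℂ K := Module.End.eigenspace (ρ : Module.End ℂ K) ((lam i : ℝ) : ℂ) with hEμ
    have hbi : b i ∈ Eμ := by
      rw [hEμ, Module.End.mem_eigenspace_iff]
      exact hsym.apply_eigenvectorBasis hn i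
    have hne : Eμ ≠ ⊥ := by
      intro h
      have : b i = 0 := by rw [h] at hbi; simpa using hbi
      exact b.toBasis.ne_zero i (by simpa using this)
    have h1 : finrank ℂ Eμ ≠ 0 := by
      simpa [Submodule.finrank_eq_zero] using hne
    have h2 : 2 ≤ finrank ℂ Eμ := by
      rcases heven ((lam i : ℝ) : ℂ) with ⟨k, hk⟩
      rw [← hEμ] at hk
      omega
    -- Eμ is contained in the span of the eigenvectors with the same eigenvalue
    have hsub : Eμ ≤ Submodule.span ℂ ((s.image b : Finset K) : Set K) := by
      intro v hv
      rw [Module.End.mem_eigenspace_iff] at hv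
      have hvrepr : ∀ j : Fin n, j ∉ s → b.repr v j = 0 := by
        intro j hj
        have hj' : lam j ≠ lam i := by
          intro h; exact hj (by simp [hs, h])
        have e1 : b.repr (ρ v) j = lam j * b.repr v j :=
          hsym.eigenvectorBasis_apply_self_apply hn v j
        have e2 : b.repr (ρ v) j = (lam i : ℂ) * b.repr v j := by
          rw [hv, map_smul]; rfl
        have : ((lam j : ℂ) - (lam i : ℂ)) * b.repr v j = 0 := by
          rw [sub_mul, ← e1, ← e2, sub_self]
        rcases mul_eq_zero.1 this with h | h
        · exfalso
          apply hj'
          have : (lam j : ℂ) = (lam i : ℂ) := by linear_combination h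
          exact_mod_cast this
        · exact h
      have hv' : v = ∑ j ∈ s, b.repr v j • b j := by
        conv_lhs => rw [← b.sum_repr v]
        rw [← Finset.sum_subset (Finset.subset_univ s)]
        intro j _ hj
        rw [hvrepr j hj, zero_smul]
      rw [hv']
      refine Submodule.sum_mem _ fun j hj => Submodule.smul_mem _ _ ?_
      exact Submodule.subset_span (by simp only [Finset.coe_image, Set.mem_image]; exact ⟨j, hj, rfl⟩)
    have h3 : finrank ℂ Eμ ≤ s.card := by
      calc finrank ℂ Eμ ≤ finrank ℂ (Submodule.span ℂ ((s.image b : Finset K) : Set K)) :=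
            Submodule.finrank_mono hsub
        _ ≤ (s.image b).card := finrank_span_finset_le_card _
        _ ≤ s.card := Finset.card_image_le
    have hcard : 1 < s.card := by omega
    obtain ⟨j, hjs, hji⟩ := Finset.exists_mem_ne hcard i
    exact ⟨j, hji, by simpa [hs] using (Finset.mem_filter.1 hjs).2⟩
  have hhalf : ∀ i, lam i ≤ 1 / 2 := by
    intro i
    obtain ⟨j, hji, hjeq⟩ := hpair i
    have hsub : ({i, j} : Finset (Fin n)) ⊆ Finset.univ := Finset.subset_univ _
    have := Finset.sum_le_sum_of_subset_of_nonneg hsub (fun k _ _ => hnn k)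
    rw [Finset.sum_pair (Ne.symm hji), hsum, hjeq] at this
    linarith
  -- conclude
  have key : ∀ i, lam i * Real.log 2 ≤ -(lam i * Real.log (lam i)) := by
    intro i
    rcases eq_or_lt_of_le (hnn i) with h | h
    · rw [← h]; simp
    · have hlog : Real.log (lam i) ≤ - Real.log 2 := by
        have := Real.log_le_log h (hhalf i)
        rwa [show (1:ℝ)/2 = 2⁻¹ by norm_num, Real.log_inv] at this
      nlinarith [hnn i]
  calc Real.log 2 = (∑ i : Fin n, lam i) * Real.log 2 := by rw [hsum, one_mul]
    _ = ∑ i : Fin n, lam i * Real.log 2 := Finset.sum_mul _ _ _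
    _ ≤ ∑ i : Fin n, -(lam i * Real.log (lam i)) := Finset.sum_le_sum fun i _ => key i
    _ = - ∑ i : Fin n, lam i * Real.log (lam i) := by rw [Finset.sum_neg_distrib]
end

section
/- Let K be a finite-dimensional complex Hilbert space and V a unitary on K. Suppose that for some family of operators (v_μ)_{μ} on K spanning all of B(K) under products of some fixed length (i.e., there exist coefficients c with Σ c_{μ₁…μ_l} v_{μ₁}⋯v_{μ_l} = 1) and some ω ∈ ℂ with |ω| = 1, we have ω V v_μ V^* = v_μ for all μ. Then ω = 1, and V commutes with each v_μ. -/
/-- Let `(v μ)` be a family of `k × k` matrices whose products of a fixed length `l`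
span `M_k(ℂ)` (so that in particular `1` is a linear combination of such products).
If a unitary `V` satisfies `ω • V vμ V* = vμ` for all `μ` with `|ω| = 1`, then `ω = 1`
and `V` commutes with each `vμ`. -/
theorem unitary_phase_intertwiner_trivial
    {k : ℕ} (hk : 0 < k) {S : Type*} [Fintype S]
    (v : S → Matrix (Fin k) (Fin k) ℂ)
    {l : ℕ} (hl : 0 < l)
    (hspan : Submodule.span ℂ
      {A : Matrix (Fin k) (Fin k) ℂ | ∃ μs : Fin l → S, A = (List.ofFn fun i => v (μs i)).prod}
      = ⊤)
    (hone : ∃ c : (Fin l → S) → ℂ,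
      ∑ μs : Fin l → S, c μs • (List.ofFn fun i => v (μs i)).prod = 1)
    (V : Matrix (Fin k) (Fin k) ℂ) (hV : V ∈ Matrix.unitaryGroup (Fin k) ℂ)
    (ω : ℂ) (hω : ‖ω‖ = 1)
    (hrel : ∀ μ, ω • (V * v μ * star V) = v μ) :
    ω = 1 ∧ ∀ μ, V * v μ = v μ * V := by
  haveI : Nonempty (Fin k) := ⟨⟨0, hk⟩⟩
  have hω0 : ω ≠ 0 := by
    intro h; rw [h] at hω; simp at hω
  have hVsV : V * star V = 1 := Matrix.mem_unitaryGroup_iff.mp hV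
  have hsVV : star V * V = 1 := Matrix.mem_unitaryGroup_iff'.mp hV
  -- conjugation formula for each generator
  have hconj : ∀ μ, V * v μ * star V = ω⁻¹ • v μ := by
    intro μ
    rw [eq_inv_smul_iff₀ hω0]
    exact hrel μ
  -- conjugation of lists
  have hlist : ∀ L : List (Matrix (Fin k) (Fin k) ℂ),
      (∀ A ∈ L, V * A * star V = ω⁻¹ • A) →
      V * L.prod * star V = ω⁻¹ ^ L.length • L.prod := by
    intro L
    induction L with
    | nil => intro _; simp [hVsV]
    | cons a L ih =>
        intro h
        have ha := h a List.mem_cons_self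
        have hL := ih fun A hA => h A (List.mem_cons_of_mem a hA)
        have key : V * (a * L.prod) * star V
            = (V * a * star V) * (V * L.prod * star V) := by
          simp only [mul_assoc]
          rw [← mul_assoc (star V) V (L.prod * star V), hsVV, one_mul]
        rw [List.prod_cons, key, ha, hL, List.length_cons]
        rw [smul_mul_assoc, mul_smul_comm, smul_smul, pow_succ]
        ring_nf
  have hP : ∀ μs : Fin l → S,
      V * (List.ofFn fun i => v (μs i)).prod * star V
        = ω⁻¹ ^ l • (List.ofFn fun i => v (μs i)).prod := by
    intro μs
    have := hlist (List.ofFn fun i => v (μs i)) ?_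
    · simpa using this
    · intro A hA
      rw [List.mem_ofFn] at hA
      obtain ⟨i, rfl⟩ := hA
      exact hconj (μs i)
  obtain ⟨c, hc⟩ := hone
  -- ω⁻¹ ^ l = 1
  have hωl : ω⁻¹ ^ l = 1 := by
    have h1 : V * (∑ μs : Fin l → S, c μs • (List.ofFn fun i => v (μs i)).prod) * star V
        = ω⁻¹ ^ l • ∑ μs : Fin l → S, c μs • (List.ofFn fun i => v (μs i)).prod := by
      rw [Finset.mul_sum, Finset.sum_mul, Finset.smul_sum]
      refine Finset.sum_congr rfl fun μs _ => ?_
      rw [mul_smul_comm, smul_mul_assoc, hP μs, smul_comm]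
    rw [hc] at h1
    simp only [mul_one, hVsV] at h1
    have := congrFun (congrFun h1 ⟨0, hk⟩) ⟨0, hk⟩
    simpa [Matrix.one_apply, Matrix.smul_apply] using this.symm
  have hP' : ∀ μs : Fin l → S,
      V * (List.ofFn fun i => v (μs i)).prod * star V
        = (List.ofFn fun i => v (μs i)).prod := by
    intro μs; rw [hP μs, hωl, one_smul]
  -- conjugation is identity on all of M_k
  have hall : ∀ A : Matrix (Fin k) (Fin k) ℂ, V * A * star V = A := by
    let f : Matrix (Fin k) (Fin k) ℂ →ₗ[ℂ] Matrix (Fin k) (Fin k) ℂ :=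
      (LinearMap.mulRight ℂ (star V)).comp (LinearMap.mulLeft ℂ V) - LinearMap.id
    have hker : Submodule.span ℂ
        {A : Matrix (Fin k) (Fin k) ℂ | ∃ μs : Fin l → S,
          A = (List.ofFn fun i => v (μs i)).prod} ≤ LinearMap.ker f := by
      rw [Submodule.span_le]
      rintro A ⟨μs, rfl⟩
      simp only [SetLike.mem_coe, LinearMap.mem_ker, f, LinearMap.sub_apply,
        LinearMap.comp_apply, LinearMap.mulRight_apply, LinearMap.mulLeft_apply,
        LinearMap.id_apply]
      rw [hP' μs, sub_self]
    rw [hspan, top_le_iff] at hker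
    have hf0 : f = 0 := LinearMap.ker_eq_top.mp hker
    intro A
    have : f A = 0 := by rw [hf0]; rfl
    simpa only [f, LinearMap.sub_apply, LinearMap.comp_apply, LinearMap.mulRight_apply,
      LinearMap.mulLeft_apply, LinearMap.id_apply, sub_eq_zero] using this
  have hcomm : ∀ μ, V * v μ = v μ * V := by
    intro μ
    calc V * v μ = V * v μ * (star V * V) := by rw [hsVV, mul_one]
      _ = (V * v μ * star V) * V := by rw [← mul_assoc]
      _ = v μ * V := by rw [hall]
  refine ⟨?_, hcomm⟩
  have hsmul : ∀ μ, ω • v μ = v μ := by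
    intro μ
    have := hrel μ
    rwa [hall] at this
  by_contra hne
  have hv0 : ∀ μ, v μ = 0 := by
    intro μ
    have := hsmul μ
    have h2 : (ω - 1) • v μ = 0 := by
      rw [sub_smul, one_smul, this, sub_self]
    exact (smul_eq_zero.mp h2).resolve_left (sub_ne_zero.mpr hne)
  obtain ⟨n, rfl⟩ : ∃ n, l = n + 1 := ⟨l - 1, (Nat.succ_pred_eq_of_pos hl).symm⟩
  have : (1 : Matrix (Fin k) (Fin k) ℂ) = 0 := by
    rw [← hc]
    refine Finset.sum_eq_zero fun μs _ => ?_
    rw [List.ofFn_succ, List.prod_cons, hv0, zero_mul, smul_zero]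
  exact one_ne_zero this
end
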